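/- Parallel merge correctness: with block boundaries i_0 = 0 ≤ i_1 ≤ … ≤ i_p = m+n and co-rank pairs (j_r, k_r) for each i_r, the concatenation over r of the stable merges of A[j_r, j_{r+1}) with B[k_r, k_{r+1}) equals the stable merge of A and B. -/

import Mathlib

/-- List indexing into `WithTop α`: out-of-range accesses are `+∞`. -/
def getTop {α : Type*} [LinearOrder α] (A : List α) (j : ℕ) : WithTop α :=
  ((A[j]?).map (fun a => (a : WithTop α))).getD ⊤

lemma getTop_cons_succ {α : Type*} [LinearOrder α] (a : α) (A : List α) (t : ℕ) :
    getTop (a :: A) (t + 1) = getTop A t := by simp [getTop]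

lemma getTop_cons_zero {α : Type*} [LinearOrder α] (a : α) (A : List α) :
    getTop (a :: A) 0 = (a : WithTop α) := by simp [getTop]

lemma getTop_drop {α : Type*} [LinearOrder α] (A : List α) (d t : ℕ) :
    getTop (A.drop d) t = getTop A (d + t) := by simp [getTop, List.getElem?_drop]

lemma getTop_mono {α : Type*} [LinearOrder α] {A : List α} (hA : A.Pairwise (· ≤ ·))
    {s t : ℕ} (h : s ≤ t) : getTop A s ≤ getTop A t := by
  by_cases ht : t < A.length
  · have hs : s < A.length := lt_of_le_of_lt h ht
    have hle : A[s] ≤ A[t] := by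
      rcases eq_or_lt_of_le h with rfl | hlt
      · exact le_refl _
      · simpa using hA.rel_get_of_lt (a := ⟨s, hs⟩) (b := ⟨t, ht⟩) hlt
    simp [getTop, List.getElem?_eq_getElem hs, List.getElem?_eq_getElem ht, hle]
  · have : A[t]? = none := by simp [List.getElem?_eq_none_iff]; omega
    simp [getTop, this]

lemma merge_split {α : Type*} [LinearOrder α] :
    ∀ n (j k : ℕ) (A B : List α), j + k = n → A.Pairwise (· ≤ ·) → B.Pairwise (· ≤ ·) →
    j ≤ A.length → k ≤ B.length →
    (j = 0 ∨ getTop A (j - 1) ≤ getTop B k) →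
    (k = 0 ∨ getTop B (k - 1) < getTop A j) →
    A.merge B (· ≤ ·) = (A.take j).merge (B.take k) (· ≤ ·)
      ++ (A.drop j).merge (B.drop k) (· ≤ ·) := by
  intro n
  induction n with
  | zero =>
    intro j k A B hn _ _ _ _ _ _
    obtain ⟨rfl, rfl⟩ : j = 0 ∧ k = 0 := by omega
    simp [List.nil_merge]
  | succ n ih =>
    intro j k A B hn hA hB hj hk h1 h2
    match j, k with
    | 0, k + 1 =>
      rcases h2 with h2 | h2; · omega
      simp only [Nat.add_sub_cancel] at h2
      match A, B with
      | A, [] => simp at hk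
      | [], b :: B' => simp [List.nil_merge]
      | a :: A', b :: B' =>
        have hba : (b : WithTop α) < (a : WithTop α) := by
          calc (b : WithTop α) = getTop (b :: B') 0 := (getTop_cons_zero _ _).symm
            _ ≤ getTop (b :: B') k := getTop_mono hB (Nat.zero_le _)
            _ < getTop (a :: A') 0 := h2
            _ = a := getTop_cons_zero _ _
        have hba' : ¬ (a ≤ b) := by
          intro h; exact absurd (WithTop.coe_le_coe.2 h) (not_le_of_gt hba)
        rw [List.cons_merge_cons]
        simp only [decide_eq_true_eq, if_neg hba']
        rw [ih 0 k (a :: A') B' (by omega) hA hB.tail (by omega) (by simpa using hk)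
          (Or.inl rfl)]
        · simp [List.take_succ_cons, List.drop_succ_cons, List.nil_merge]
        · rcases Nat.eq_zero_or_pos k with rfl | hkpos
          · exact Or.inl rfl
          · refine Or.inr ?_
            have : getTop B' (k - 1) = getTop (b :: B') k := by
              rw [← getTop_cons_succ b B' (k-1)]; congr 1; omega
            rw [this]; exact h2
    | j + 1, 0 =>
      rcases h1 with h1 | h1; · omega
      simp only [Nat.add_sub_cancel] at h1
      match A, B with
      | [], B => simp at hj
      | a :: A', [] => simp [List.merge_right]
      | a :: A', b :: B' =>
        have hab : (a : WithTop α) ≤ (b : WithTop α) := by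
          calc (a : WithTop α) = getTop (a :: A') 0 := (getTop_cons_zero _ _).symm
            _ ≤ getTop (a :: A') j := getTop_mono hA (Nat.zero_le _)
            _ ≤ getTop (b :: B') 0 := h1
            _ = b := getTop_cons_zero _ _
        have hab' : a ≤ b := WithTop.coe_le_coe.1 hab
        rw [List.cons_merge_cons]
        simp only [decide_eq_true_eq, if_pos hab']
        rw [ih j 0 A' (b :: B') (by omega) hA.tail hB (by simpa using hj) (by omega) ?_
          (Or.inl rfl)]
        · simp [List.take_succ_cons, List.drop_succ_cons, List.merge_right]
        · rcases Nat.eq_zero_or_pos j with rfl | hjpos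
          · exact Or.inl rfl
          · refine Or.inr ?_
            have : getTop A' (j - 1) = getTop (a :: A') j := by
              rw [← getTop_cons_succ a A' (j-1)]; congr 1; omega
            rw [this]; exact h1
    | j + 1, k + 1 =>
      rcases h1 with h1 | h1; · omega
      rcases h2 with h2 | h2; · omega
      simp only [Nat.add_sub_cancel] at h1 h2
      match A, B with
      | [], B => simp at hj
      | a :: A', [] => simp at hk
      | a :: A', b :: B' =>
        rw [List.cons_merge_cons, List.take_succ_cons, List.take_succ_cons,
          List.cons_merge_cons]
        by_cases hab : a ≤ b
        · simp only [decide_eq_true_eq, if_pos hab]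
          rw [List.drop_succ_cons,
            ih j (k+1) A' (b :: B') (by omega) hA.tail hB (by simpa using hj) hk ?_ ?_]
          · simp [List.take_succ_cons]
          · rcases Nat.eq_zero_or_pos j with rfl | hjpos
            · exact Or.inl rfl
            · refine Or.inr ?_
              have : getTop A' (j - 1) = getTop (a :: A') j := by
                rw [← getTop_cons_succ a A' (j-1)]; congr 1; omega
              rw [this]; exact h1
          · refine Or.inr ?_
            simp only [Nat.add_sub_cancel]
            rw [← getTop_cons_succ a A' j]
            exact h2
        · simp only [decide_eq_true_eq, if_neg hab]
          rw [List.drop_succ_cons (l := B'),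
            ih (j+1) k (a :: A') B' (by omega) hA hB.tail hj (by simpa using hk) ?_ ?_]
          · simp [List.take_succ_cons]
          · refine Or.inr ?_
            simp only [Nat.add_sub_cancel]
            rw [← getTop_cons_succ b B' k]
            exact h1
          · rcases Nat.eq_zero_or_pos k with rfl | hkpos
            · exact Or.inl rfl
            · refine Or.inr ?_
              have : getTop B' (k - 1) = getTop (b :: B') k := by
                rw [← getTop_cons_succ b B' (k-1)]; congr 1; omega
              rw [this]; exact h2

/-- The co-rank conditions for a pair `(j,k)` with `j + k = i`. -/
def IsCoRankL {α : Type*} [LinearOrder α] (A B : List α) (i j k : ℕ) : Prop :=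
  j + k = i ∧ j ≤ A.length ∧ k ≤ B.length ∧
  (j = 0 ∨ getTop A (j - 1) ≤ getTop B k) ∧
  (k = 0 ∨ getTop B (k - 1) < getTop A j)

theorem parallel_merge_correct {α : Type*} [LinearOrder α]
    (A B : List α) (hA : A.Pairwise (· ≤ ·)) (hB : B.Pairwise (· ≤ ·))
    (p : ℕ) (i J K : ℕ → ℕ)
    (hi0 : i 0 = 0) (hip : i p = A.length + B.length)
    (himono : ∀ r < p, i r ≤ i (r + 1))
    (hcorank : ∀ r ≤ p, IsCoRankL A B (i r) (J r) (K r))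
    (hJmono : ∀ r < p, J r ≤ J (r + 1)) (hKmono : ∀ r < p, K r ≤ K (r + 1)) :
    ((List.range p).map (fun r =>
        ((A.drop (J r)).take (J (r + 1) - J r)).merge
          ((B.drop (K r)).take (K (r + 1) - K r)) (· ≤ ·))).flatten =
      A.merge B (· ≤ ·) := by
  have key : ∀ d s, s + d = p →
      ((List.range' s d).map (fun r =>
        ((A.drop (J r)).take (J (r + 1) - J r)).merge
          ((B.drop (K r)).take (K (r + 1) - K r)) (· ≤ ·))).flatten =
      (A.drop (J s)).merge (B.drop (K s)) (· ≤ ·) := by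
    intro d
    induction d with
    | zero =>
      intro s hs
      obtain ⟨hsum, hjl, hkl, -, -⟩ := hcorank p le_rfl
      rw [hip] at hsum
      have hJp : J p = A.length := by omega
      have hKp : K p = B.length := by omega
      have hsp : s = p := by omega
      rw [List.range'_zero] at *
      rw [hsp]
      simp [hJp, hKp, List.drop_length, List.nil_merge]
    | succ d ihd =>
      intro s hs
      have hsp : s < p := by omega
      have hs1 : s + 1 ≤ p := hsp
      obtain ⟨hsum1, hjl1, hkl1, hc11, hc21⟩ := hcorank (s + 1) hs1
      have hJm : J s ≤ J (s + 1) := hJmono s hsp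
      have hKm : K s ≤ K (s + 1) := hKmono s hsp
      rw [List.range'_succ, List.map_cons, List.flatten_cons, ihd (s + 1) (by omega)]
      rw [merge_split ((J (s+1) - J s) + (K (s+1) - K s)) (J (s+1) - J s) (K (s+1) - K s)
        (A.drop (J s)) (B.drop (K s)) rfl hA.drop hB.drop
        (by rw [List.length_drop]; omega) (by rw [List.length_drop]; omega) ?_ ?_]
      · congr 1
        · congr 1 <;> rw [List.drop_drop] <;> congr 1 <;> omega
      · rcases Nat.eq_or_lt_of_le hJm with heq | hlt
        · exact Or.inl (by omega)
        · refine Or.inr ?_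
          rw [getTop_drop, getTop_drop]
          have e1 : J s + (J (s + 1) - J s - 1) = J (s + 1) - 1 := by omega
          have e2 : K s + (K (s + 1) - K s) = K (s + 1) := by omega
          rw [e1, e2]
          rcases hc11 with h | h
          · omega
          · exact h
      · rcases Nat.eq_or_lt_of_le hKm with heq | hlt
        · exact Or.inl (by omega)
        · refine Or.inr ?_
          rw [getTop_drop, getTop_drop]
          have e1 : K s + (K (s + 1) - K s - 1) = K (s + 1) - 1 := by omega
          have e2 : J s + (J (s + 1) - J s) = J (s + 1) := by omega
          rw [e1, e2]
          rcases hc21 with h | h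
          · omega
          · exact h
  obtain ⟨hsum0, -, -, -, -⟩ := hcorank 0 (Nat.zero_le _)
  rw [hi0] at hsum0
  have hJ0 : J 0 = 0 := by omega
  have hK0 : K 0 = 0 := by omega
  have := key p 0 (by omega)
  rw [hJ0, hK0, List.drop_zero, List.drop_zero] at this
  rw [List.range_eq_range']
  exact this
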